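/- For any positive integers m and n, there exists an orthogonal (m+n)×(m+n) real matrix Q such that for every row j, the sum of squares of the last m entries of row j equals m/(m+n). -/

import Mathlib

open Matrix

/-- The key predicate: an orthogonal matrix over `Fin n ⊕ Fin m` whose rows each have
squared mass `m/(m+n)` on the `inr` (last `m`) columns. -/
def BalOrth (m n : ℕ) : Prop :=
  ∃ Q : Matrix (Fin n ⊕ Fin m) (Fin n ⊕ Fin m) ℝ,
    Qᵀ * Q = 1 ∧ ∀ j, ∑ i : Fin m, (Q j (Sum.inr i)) ^ 2 = (m : ℝ) / ((m : ℝ) + (n : ℝ))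

private lemma sum_sq_smul_one {k : ℕ} (a : ℝ) (j : Fin k) :
    ∑ i : Fin k, ((a • (1 : Matrix (Fin k) (Fin k) ℝ)) j i) ^ 2 = a ^ 2 := by
  have h : ∀ i : Fin k, ((a • (1 : Matrix (Fin k) (Fin k) ℝ)) j i) ^ 2
      = if j = i then a ^ 2 else 0 := by
    intro i
    by_cases h : j = i <;> simp [Matrix.smul_apply, Matrix.one_apply, h]
  rw [Finset.sum_congr rfl (fun i _ => h i)]
  simp

private lemma balOrth_diag (n : ℕ) (hn : 0 < n) : BalOrth n n := by
  set a : ℝ := Real.sqrt (1 / 2) with ha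
  have ha2 : a * a = 1 / 2 := Real.mul_self_sqrt (by norm_num)
  refine ⟨Matrix.fromBlocks (a • 1) (a • 1) (-(a • 1)) (a • 1), ?_, ?_⟩
  · rw [Matrix.fromBlocks_transpose, Matrix.fromBlocks_multiply, ← Matrix.fromBlocks_one,
      Matrix.fromBlocks_inj]
    refine ⟨?_, ?_, ?_, ?_⟩
    · simp only [Matrix.transpose_smul, Matrix.transpose_one, Matrix.transpose_neg,
        Matrix.smul_mul, Matrix.mul_smul, Matrix.mul_one, Matrix.one_mul, smul_smul,
        Matrix.neg_mul, Matrix.mul_neg, smul_neg, neg_neg]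
      match_scalars
      linear_combination 2 * ha2
    · simp only [Matrix.transpose_smul, Matrix.transpose_one, Matrix.transpose_neg,
        Matrix.smul_mul, Matrix.mul_smul, Matrix.mul_one, Matrix.one_mul, smul_smul,
        Matrix.neg_mul, Matrix.mul_neg, smul_neg, neg_neg]
      match_scalars
      ring
    · simp only [Matrix.transpose_smul, Matrix.transpose_one, Matrix.transpose_neg,
        Matrix.smul_mul, Matrix.mul_smul, Matrix.mul_one, Matrix.one_mul, smul_smul,
        Matrix.neg_mul, Matrix.mul_neg, smul_neg, neg_neg]
      match_scalars
      ring
    · simp only [Matrix.transpose_smul, Matrix.transpose_one,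
        Matrix.smul_mul, Matrix.mul_smul, Matrix.mul_one, Matrix.one_mul, smul_smul]
      match_scalars
      linear_combination 2 * ha2
  · intro j
    have hhalf : (n : ℝ) / ((n : ℝ) + (n : ℝ)) = a ^ 2 := by
      have hn' : (0 : ℝ) < n := by exact_mod_cast hn
      rw [pow_two, ha2]; field_simp; ring
    rcases j with j | j
    · rw [hhalf]
      simpa using sum_sq_smul_one a j
    · rw [hhalf]
      simpa using sum_sq_smul_one a j

/-- Swap the roles of the two blocks. -/
private lemma balOrth_swap (m n : ℕ) (hm : 0 < m) (hn : 0 < n) (h : BalOrth n m) :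
    BalOrth m n := by
  obtain ⟨Q', hQ'orth, hQ'bal⟩ := h
  have hrow : Q' * Q'ᵀ = 1 := mul_eq_one_comm.mp hQ'orth
  set e : (Fin m ⊕ Fin n) ≃ (Fin n ⊕ Fin m) := Equiv.sumComm (Fin m) (Fin n) with he
  refine ⟨Q'.submatrix e.symm e.symm, ?_, ?_⟩
  · rw [Matrix.transpose_submatrix, Matrix.submatrix_mul_equiv _ _ _ e.symm _, hQ'orth,
      Matrix.submatrix_one_equiv]
  · intro j
    have hsum1 : ∑ k : Fin m ⊕ Fin n, (Q' (e.symm j) k) ^ 2 = 1 := by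
      have h2 := congrFun (congrFun hrow (e.symm j)) (e.symm j)
      simp only [Matrix.mul_apply, Matrix.transpose_apply, Matrix.one_apply_eq] at h2
      rw [← h2]
      exact Finset.sum_congr rfl (fun k _ => by ring)
    rw [Fintype.sum_sum_type] at hsum1
    have hbal := hQ'bal (e.symm j)
    have hkey : ∑ i : Fin m, (Q' (e.symm j) (Sum.inl i)) ^ 2
        = 1 - (n : ℝ) / ((n : ℝ) + (m : ℝ)) := by
      rw [← hbal]; linarith
    have hgoal : ∀ i : Fin m, Q'.submatrix e.symm e.symm j (Sum.inr i)
        = Q' (e.symm j) (Sum.inl i) := by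
      intro i; simp [Matrix.submatrix_apply, he]
    rw [Finset.sum_congr rfl (fun i _ => by rw [hgoal i]), hkey]
    have h1 : (m : ℝ) / ((m : ℝ) + (n : ℝ)) + (n : ℝ) / ((n : ℝ) + (m : ℝ)) = 1 := by
      rw [add_comm (n : ℝ) (m : ℝ), ← add_div, div_self]
      positivity
    linarith

/-- Generic block construction: if `V` has orthonormal columns and `r² + s² = 1`,
the block matrix `[[1+(r-1)VVᵀ, sV], [-sVᵀ, r·1]]` is orthogonal. -/
private lemma step_orth {ι : Type*} [Fintype ι] [DecidableEq ι] {m : ℕ}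
    (V : Matrix ι (Fin m) ℝ) (r s : ℝ) (hVtV : Vᵀ * V = 1) (h1 : r * r + s * s = 1) :
    (Matrix.fromBlocks (1 + (r - 1) • (V * Vᵀ)) (s • V) (-(s • Vᵀ)) (r • 1))ᵀ *
      (Matrix.fromBlocks (1 + (r - 1) • (V * Vᵀ)) (s • V) (-(s • Vᵀ)) (r • 1)) = 1 := by
  have hPP : (V * Vᵀ) * (V * Vᵀ) = V * Vᵀ := by
    rw [Matrix.mul_assoc, ← Matrix.mul_assoc Vᵀ, hVtV, Matrix.one_mul]
  have hPV : (V * Vᵀ) * V = V := by rw [Matrix.mul_assoc, hVtV, Matrix.mul_one]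
  have hVtP : Vᵀ * (V * Vᵀ) = Vᵀ := by rw [← Matrix.mul_assoc, hVtV, Matrix.one_mul]
  rw [Matrix.fromBlocks_transpose, Matrix.fromBlocks_multiply, ← Matrix.fromBlocks_one,
    Matrix.fromBlocks_inj]
  refine ⟨?_, ?_, ?_, ?_⟩
  · simp only [Matrix.transpose_add, Matrix.transpose_one, Matrix.transpose_smul,
      Matrix.transpose_mul, Matrix.transpose_transpose, Matrix.transpose_neg,
      Matrix.neg_mul, Matrix.mul_neg, neg_neg, Matrix.smul_mul, Matrix.mul_smul,
      Matrix.add_mul, Matrix.mul_add, Matrix.one_mul, Matrix.mul_one, smul_smul, hPP]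
    match_scalars
    · ring
    · linear_combination h1
  · simp only [Matrix.transpose_add, Matrix.transpose_one, Matrix.transpose_smul,
      Matrix.transpose_mul, Matrix.transpose_transpose, Matrix.transpose_neg,
      Matrix.neg_mul, Matrix.mul_neg, neg_neg, Matrix.smul_mul, Matrix.mul_smul,
      Matrix.add_mul, Matrix.mul_add, Matrix.one_mul, Matrix.mul_one, smul_smul, hPV]
    match_scalars
    ring
  · simp only [Matrix.transpose_add, Matrix.transpose_one, Matrix.transpose_smul,
      Matrix.transpose_mul, Matrix.transpose_transpose, Matrix.transpose_neg,
      Matrix.neg_mul, Matrix.mul_neg, neg_neg, Matrix.smul_mul, Matrix.mul_smul,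
      Matrix.add_mul, Matrix.mul_add, Matrix.one_mul, Matrix.mul_one, smul_smul, hVtP]
    match_scalars
    ring
  · simp only [Matrix.transpose_smul, Matrix.transpose_one, Matrix.smul_mul,
      Matrix.mul_smul, Matrix.one_mul, Matrix.mul_one, smul_smul, hVtV]
    match_scalars
    linear_combination h1

/-- The main step: reduce `(m, n)` with `m < n` to `(m, n - m)`. -/
private lemma balOrth_step (m n : ℕ) (hm : 0 < m) (hmn : m < n) (h : BalOrth m (n - m)) :
    BalOrth m n := by
  obtain ⟨Q', hQ'orth, hQ'bal⟩ := h
  -- V : the last-m-columns block of Q'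
  set V : Matrix (Fin (n - m) ⊕ Fin m) (Fin m) ℝ := fun j i => Q' j (Sum.inr i) with hV
  have hVtV : Vᵀ * V = 1 := by
    ext i i'
    have h2 := congrFun (congrFun hQ'orth (Sum.inr i)) (Sum.inr i')
    simp only [Matrix.mul_apply, Matrix.transpose_apply] at h2 ⊢
    simp only [hV]
    rw [h2]
    by_cases hii : i = i' <;> simp [Matrix.one_apply, hii]
  have hVrow : ∀ j, ∑ i : Fin m, (V j i) ^ 2 = (m : ℝ) / (n : ℝ) := by
    intro j
    have hb := hQ'bal j
    have hc : ((n - m : ℕ) : ℝ) = (n : ℝ) - (m : ℝ) := by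
      rw [Nat.cast_sub hmn.le]
    rw [hc] at hb
    have : ∑ i : Fin m, (Q' j (Sum.inr i)) ^ 2 = (m : ℝ) / (n : ℝ) := by
      rw [hb]; congr 1; ring
    simpa [hV] using this
  have hPV : V * Vᵀ * V = V := by rw [Matrix.mul_assoc, hVtV, Matrix.mul_one]
  -- scalars
  have hnN : (0 : ℝ) < (m : ℝ) + (n : ℝ) := by positivity
  set r : ℝ := Real.sqrt ((m : ℝ) / ((m : ℝ) + (n : ℝ))) with hr
  set s : ℝ := Real.sqrt ((n : ℝ) / ((m : ℝ) + (n : ℝ))) with hs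
  have hr2 : r * r = (m : ℝ) / ((m : ℝ) + (n : ℝ)) := Real.mul_self_sqrt (by positivity)
  have hs2 : s * s = (n : ℝ) / ((m : ℝ) + (n : ℝ)) := Real.mul_self_sqrt (by positivity)
  have hone : (m : ℝ) / ((m : ℝ) + (n : ℝ)) + (n : ℝ) / ((m : ℝ) + (n : ℝ)) = 1 := by
    rw [← add_div, div_self (ne_of_gt hnN)]
  -- the block matrix
  set Q0 : Matrix ((Fin (n - m) ⊕ Fin m) ⊕ Fin m) ((Fin (n - m) ⊕ Fin m) ⊕ Fin m) ℝ :=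
    Matrix.fromBlocks (1 + (r - 1) • (V * Vᵀ)) (s • V) (-(s • Vᵀ)) (r • 1) with hQ0
  have hQ0orth : Q0ᵀ * Q0 = 1 := by
    rw [hQ0]
    exact step_orth V r s hVtV (by rw [hr2, hs2]; exact hone)
  have hQ0bal : ∀ j, ∑ i : Fin m, (Q0 j (Sum.inr i)) ^ 2
      = (m : ℝ) / ((m : ℝ) + (n : ℝ)) := by
    intro j
    rcases j with j | j
    · have hent : ∀ i : Fin m, Q0 (Sum.inl j) (Sum.inr i) = s * V j i := by
        intro i; rw [hQ0, Matrix.fromBlocks_apply₁₂]; simp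
      rw [Finset.sum_congr rfl (fun i _ => by rw [hent i])]
      have hfac : ∑ i : Fin m, (s * V j i) ^ 2 = s ^ 2 * ∑ i : Fin m, (V j i) ^ 2 := by
        rw [Finset.mul_sum]; exact Finset.sum_congr rfl (fun i _ => by ring)
      rw [hfac, hVrow j, pow_two, hs2]
      have hn0 : (0 : ℝ) < (n : ℝ) := by
        have : 0 < n := lt_trans hm hmn
        exact_mod_cast this
      rw [div_mul_div_comm, mul_comm (n : ℝ) (m : ℝ)]
      rw [mul_comm ((m : ℝ) + (n : ℝ)) (n : ℝ), ← div_div,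
        mul_div_assoc, div_self (ne_of_gt hn0), mul_one]
    · have hent : ∀ i : Fin m, Q0 (Sum.inr j) (Sum.inr i)
          = (r • (1 : Matrix (Fin m) (Fin m) ℝ)) j i := by
        intro i; rw [hQ0, Matrix.fromBlocks_apply₂₂]
      rw [Finset.sum_congr rfl (fun i _ => by rw [hent i])]
      rw [sum_sq_smul_one r j, pow_two, hr2]
  -- reindex to Fin n ⊕ Fin m
  have hnm : n - m + m = n := by omega
  set e : (Fin (n - m) ⊕ Fin m) ≃ Fin n := finSumFinEquiv.trans (finCongr hnm) with he
  set f : ((Fin (n - m) ⊕ Fin m) ⊕ Fin m) ≃ (Fin n ⊕ Fin m) :=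
    Equiv.sumCongr e (Equiv.refl (Fin m)) with hf
  refine ⟨Q0.submatrix f.symm f.symm, ?_, ?_⟩
  · rw [Matrix.transpose_submatrix, Matrix.submatrix_mul_equiv _ _ _ f.symm _, hQ0orth,
      Matrix.submatrix_one_equiv]
  · intro j
    have hfr : ∀ i : Fin m, f.symm (Sum.inr i) = Sum.inr i := by
      intro i; simp [hf]
    rw [Finset.sum_congr rfl (fun i _ => by rw [Matrix.submatrix_apply, hfr i])]
    exact hQ0bal (f.symm j)

private lemma balOrth_all : ∀ N m n : ℕ, m + n = N → 0 < m → 0 < n → BalOrth m n := by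
  intro N
  induction N using Nat.strong_induction_on with
  | _ N IH =>
    intro m n hN hm hn
    rcases lt_trichotomy m n with h | h | h
    · have h1 : BalOrth m (n - m) := IH n (by omega) m (n - m) (by omega) hm (by omega)
      exact balOrth_step m n hm h h1
    · subst h; exact balOrth_diag m hm
    · have h1 : BalOrth n (m - n) := IH m (by omega) n (m - n) (by omega) hn (by omega)
      exact balOrth_swap m n hm hn (balOrth_step n m hn h h1)

theorem exists_orthogonal_matrix_balanced_rows (m n : ℕ) (hm : 0 < m) (hn : 0 < n) :
    ∃ Q : Matrix (Fin (m + n)) (Fin (m + n)) ℝ,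
      Matrix.transpose Q * Q = 1 ∧
      ∀ j : Fin (m + n),
        ∑ i : Fin m, (Q j ⟨n + i, by omega⟩) ^ 2 = (m : ℝ) / (m + n) := by
  obtain ⟨Q0, hQ0orth, hQ0bal⟩ := balOrth_all (m + n) m n rfl hm hn
  have hnm : n + m = m + n := by omega
  set e : (Fin n ⊕ Fin m) ≃ Fin (m + n) := finSumFinEquiv.trans (finCongr hnm) with he
  refine ⟨Q0.submatrix e.symm e.symm, ?_, ?_⟩
  · rw [Matrix.transpose_submatrix, Matrix.submatrix_mul_equiv _ _ _ e.symm _, hQ0orth,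
      Matrix.submatrix_one_equiv]
  · intro j
    have hfr : ∀ i : Fin m, e.symm ⟨n + i, by omega⟩ = Sum.inr i := by
      intro i
      rw [Equiv.symm_apply_eq]
      simp only [he, Equiv.trans_apply, finSumFinEquiv_apply_right]
      apply Fin.ext
      simp [Fin.natAdd]
    rw [Finset.sum_congr rfl (fun i _ => by rw [Matrix.submatrix_apply, hfr i])]
    exact hQ0bal (e.symm j)
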